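/- The unbounded evasion number 𝔢_ubd is at most the pair-splitting number 𝔰_pair. -/

import Mathlib

open Filter Cardinal

/-- The predictor `(D, π)` predicts the sequence `s`: for all but finitely
many `n ∈ D`, `π n (s ↾ n) = s n`. -/
def Predicts (D : Set ℕ) (π : (n : ℕ) → (Fin n → ℕ) → ℕ) (s : ℕ → ℕ) : Prop :=
  {n ∈ D | π n (fun i => s i) ≠ s n}.Finite

/-- The unbounded evasion number `𝔢_ubd`: the minimum over all
`f : ω → ω \ 2` of the least size of a family `E ⊆ ∏ n, f n` not predicted
by any single predictor. -/
noncomputable def eUbd : Cardinal :=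
  sInf {c : Cardinal | ∃ f : ℕ → ℕ, (∀ n, 2 ≤ f n) ∧ ∃ E : Set (ℕ → ℕ),
    (∀ s ∈ E, ∀ n, s n < f n) ∧
    (∀ (D : Set ℕ) (π : (n : ℕ) → (Fin n → ℕ) → ℕ), D.Infinite →
      ∃ s ∈ E, ¬ Predicts D π s) ∧ #E = c}

/-- `A` is an unbounded set of pairs of natural numbers. -/
def UnboundedPairs (A : Set (ℕ × ℕ)) : Prop :=
  (∀ p ∈ A, p.1 < p.2) ∧ ∀ k : ℕ, ∃ p ∈ A, k ≤ p.1

/-- `X` pair-splits `A`. -/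
def PairSplits (X : Set ℕ) (A : Set (ℕ × ℕ)) : Prop :=
  {p ∈ A | ¬ (p.1 ∈ X ↔ p.2 ∈ X)}.Infinite

/-- The pair-splitting number `𝔰_pair`. -/
noncomputable def sPair : Cardinal :=
  sInf {c : Cardinal | ∃ F : Set (Set ℕ), (∀ X ∈ F, X.Infinite) ∧
    (∀ A : Set (ℕ × ℕ), UnboundedPairs A → ∃ X ∈ F, PairSplits X A) ∧ #F = c}

/- ### Auxiliary development -/

namespace EubdAux

/-- Block boundaries: `tB n` is the start of the `n`-th block. -/
def tB : ℕ → ℕ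
  | 0 => 0
  | n + 1 => tB n + (2 ^ (2 ^ (tB n)) + 1)

/-- Length of the `n`-th block. -/
def len (n : ℕ) : ℕ := 2 ^ (2 ^ (tB n)) + 1

/-- The bounding function. -/
def fB (n : ℕ) : ℕ := 2 ^ len n

lemma tB_succ (n : ℕ) : tB (n + 1) = tB n + len n := rfl

lemma one_le_len (n : ℕ) : 1 ≤ len n := Nat.le_add_left 1 _

lemma two_le_fB (n : ℕ) : 2 ≤ fB n := by
  calc (2:ℕ) = 2 ^ 1 := rfl
  _ ≤ 2 ^ len n := Nat.pow_le_pow_right (by norm_num) (one_le_len n)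

lemma le_tB (n : ℕ) : n ≤ tB n := by
  induction n with
  | zero => simp [tB]
  | succ n ih =>
    have h := tB_succ n
    have h1 := one_le_len n
    omega

/-- The `i`-th binary digit of `m`. -/
def bt (m i : ℕ) : ℕ := m / 2 ^ i % 2

lemma sum_lt_pow (g : ℕ → ℕ) (hg : ∀ j, g j ≤ 2 ^ j) (L : ℕ) :
    (∑ j ∈ Finset.range L, g j) < 2 ^ L := by
  induction L with
  | zero => simp
  | succ L ih =>
    rw [Finset.sum_range_succ, pow_succ]
    have := hg L
    omega

lemma bt_sum (g : ℕ → ℕ) (hg : ∀ j, g j = 0 ∨ g j = 2 ^ j) :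
    ∀ L i, i < L → bt (∑ j ∈ Finset.range L, g j) i = g i / 2 ^ i := by
  intro L
  induction L with
  | zero => omega
  | succ L ih =>
    intro i hi
    rw [Finset.sum_range_succ]
    have hSlt : (∑ j ∈ Finset.range L, g j) < 2 ^ L :=
      sum_lt_pow g (fun j => by rcases hg j with h | h <;> simp [h]) L
    rcases Nat.lt_or_ge i L with hiL | hiL
    · rcases hg L with h | h
      · rw [h, Nat.add_zero]; exact ih i hiL
      · rw [h]
        have h2 : (2:ℕ) ^ L = 2 ^ i * 2 ^ (L - i) := by
          rw [← pow_add]; congr 1; omega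
        have h3 : (2:ℕ) ^ (L - i) = 2 ^ (L - i - 1) * 2 := by
          rw [← pow_succ]; congr 1; omega
        unfold bt
        rw [h2, Nat.add_mul_div_left _ _ (Nat.two_pow_pos i), h3,
          ← Nat.mul_comm 2 (2 ^ (L - i - 1)), Nat.mul_comm,
          Nat.add_mul_mod_self_right]
        exact ih i hiL
    · have hieq : i = L := by omega
      subst hieq
      rcases hg i with h | h
      · rw [h, Nat.add_zero]
        unfold bt
        rw [Nat.div_eq_of_lt hSlt]
        simp
      · rw [h]
        unfold bt
        rw [Nat.add_div_right _ (Nat.two_pow_pos i),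
          Nat.div_eq_of_lt hSlt, Nat.div_self (Nat.two_pow_pos i)]

open Classical in
/-- Code of `X` on the `n`-th block. -/
noncomputable def code (X : Set ℕ) (n : ℕ) : ℕ :=
  ∑ i ∈ Finset.range (len n), if (tB n + i) ∈ X then 2 ^ i else 0

lemma code_lt (X : Set ℕ) (n : ℕ) : code X n < fB n := by
  classical
  unfold code fB
  exact sum_lt_pow _ (fun j => by by_cases h : tB n + j ∈ X <;> simp [h]) (len n)

open Classical in
lemma code_bt (X : Set ℕ) (n i : ℕ) (hi : i < len n) :
    bt (code X n) i = if (tB n + i) ∈ X then 1 else 0 := by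
  unfold code
  rw [bt_sum (fun j => if (tB n + j) ∈ X then 2 ^ j else 0)
    (fun j => by by_cases h : tB n + j ∈ X <;> simp [h]) (len n) i hi]
  split
  · exact Nat.div_self (Nat.two_pow_pos i)
  · simp

lemma prod_fB (n : ℕ) : (∏ i ∈ Finset.range n, fB i) = 2 ^ tB n := by
  induction n with
  | zero => simp [tB]
  | succ n ih =>
    rw [Finset.prod_range_succ, ih, tB_succ, pow_add]
    rfl

/-- Pigeonhole: there are two positions in the `n`-th block which get the same
bit under `π n h` for *every* possible history `h`. -/
lemma exists_pair (π : (n : ℕ) → (Fin n → ℕ) → ℕ) (n : ℕ) :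
    ∃ a b : ℕ, a < b ∧ b < len n ∧
      ∀ h : Fin n → ℕ, (∀ i, h i < fB i) → bt (π n h) a = bt (π n h) b := by
  classical
  let Φ : Fin (len n) → ((∀ i : Fin n, Fin (fB i)) → Bool) :=
    fun a h => decide (bt (π n (fun i => (h i : ℕ))) (a : ℕ) = 1)
  have hcardH : Fintype.card ((∀ i : Fin n, Fin (fB i)) → Bool) = 2 ^ (2 ^ tB n) := by
    rw [Fintype.card_fun, Fintype.card_pi]
    simp only [Fintype.card_fin, Fintype.card_bool]
    rw [Fin.prod_univ_eq_prod_range, prod_fB]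
  have hlt : Fintype.card ((∀ i : Fin n, Fin (fB i)) → Bool) < Fintype.card (Fin (len n)) := by
    rw [hcardH, Fintype.card_fin]
    show 2 ^ (2 ^ tB n) < len n
    unfold len
    omega
  obtain ⟨a, b, hab, hΦ⟩ := Fintype.exists_ne_map_eq_of_card_lt Φ hlt
  have key : ∀ (x y : Fin (len n)), Φ x = Φ y → ∀ h : Fin n → ℕ, (∀ i, h i < fB i) →
      bt (π n h) x = bt (π n h) y := by
    intro x y hxy h hh
    have hcf := congrFun hxy (fun i => (⟨h i, hh i⟩ : Fin (fB i)))
    simp only [Φ] at hcf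
    have hconv : (fun i : Fin n => (((⟨h i, hh i⟩ : Fin (fB i)) : ℕ))) = h := rfl
    rw [hconv] at hcf
    have hiff := decide_eq_decide.mp hcf
    have hx2 := Nat.mod_two_eq_zero_or_one (π n h / 2 ^ (x : ℕ))
    have hy2 := Nat.mod_two_eq_zero_or_one (π n h / 2 ^ (y : ℕ))
    unfold bt at hiff ⊢
    omega
  rcases lt_or_gt_of_ne hab with hlt' | hlt'
  · exact ⟨a, b, hlt', b.isLt, key a b hΦ⟩
  · exact ⟨b, a, hlt', a.isLt, fun h hh => (key a b hΦ h hh).symm⟩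

/-- Main construction: if `F` pair-splits every unbounded set of pairs, then for
every predictor there is `X ∈ F` whose code evades it. -/
lemma evade (F : Set (Set ℕ))
    (hsplit : ∀ A : Set (ℕ × ℕ), UnboundedPairs A → ∃ X ∈ F, PairSplits X A)
    (D : Set ℕ) (π : (n : ℕ) → (Fin n → ℕ) → ℕ) (hD : D.Infinite) :
    ∃ X ∈ F, ¬ Predicts D π (code X) := by
  classical
  choose av bv hab hblt hspec using exists_pair π
  set Ψ : ℕ → ℕ × ℕ := fun n => (tB n + av n, tB n + bv n) with hΨ
  have hA : UnboundedPairs (Ψ '' D) := by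
    constructor
    · rintro p ⟨n, _, rfl⟩
      exact Nat.add_lt_add_left (hab n) _
    · intro k
      have hne : ¬ D ⊆ Set.Iio k := fun hsub => hD (Set.Finite.subset (Set.finite_Iio k) hsub)
      obtain ⟨n, hnD, hnk⟩ := Set.not_subset.mp hne
      refine ⟨Ψ n, ⟨n, hnD, rfl⟩, ?_⟩
      simp only [Set.mem_Iio, not_lt] at hnk
      calc k ≤ n := hnk
      _ ≤ tB n := le_tB n
      _ ≤ tB n + av n := Nat.le_add_right _ _
  obtain ⟨X, hXF, hXs⟩ := hsplit (Ψ '' D) hA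
  refine ⟨X, hXF, ?_⟩
  set N : Set ℕ := {n | n ∈ D ∧ ¬ ((tB n + av n) ∈ X ↔ (tB n + bv n) ∈ X)} with hN
  have hNinf : N.Infinite := by
    have hsub : {p ∈ Ψ '' D | ¬ (p.1 ∈ X ↔ p.2 ∈ X)} ⊆ Ψ '' N := by
      rintro p ⟨⟨n, hnD, rfl⟩, hp⟩
      exact ⟨n, ⟨hnD, hp⟩, rfl⟩
    exact Set.Infinite.of_image Ψ (Set.Infinite.mono hsub hXs)
  intro hPred
  apply hNinf.mono _ hPred
  intro n hn
  obtain ⟨hnD, hniff⟩ := hn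
  refine ⟨hnD, ?_⟩
  intro heq
  have hbts := hspec n (fun i : Fin n => code X i) (fun i => code_lt X i)
  rw [heq] at hbts
  have ha' := code_bt X n (av n) (lt_trans (hab n) (hblt n))
  have hb' := code_bt X n (bv n) (hblt n)
  by_cases hmema : (tB n + av n) ∈ X <;> by_cases hmemb : (tB n + bv n) ∈ X
  · exact hniff (iff_of_true hmema hmemb)
  · rw [if_pos hmema] at ha'; rw [if_neg hmemb] at hb'; omega
  · rw [if_neg hmema] at ha'; rw [if_pos hmemb] at hb'; omega
  · exact hniff (iff_of_false hmema hmemb)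

/-- Every unbounded set of pairs is pair-split by some infinite set. -/
lemma exists_pairSplits (A : Set (ℕ × ℕ)) (hA : UnboundedPairs A) :
    ∃ X : Set ℕ, X.Infinite ∧ PairSplits X A := by
  classical
  have hstep : ∀ k : ℕ, ∃ p : ℕ × ℕ, p ∈ A ∧ k ≤ p.1 := by
    intro k; obtain ⟨p, hp, hk⟩ := hA.2 k; exact ⟨p, hp, hk⟩
  choose ch hchA hchge using hstep
  let g : ℕ → ℕ × ℕ := fun k => Nat.rec (ch 0) (fun _ p => ch (p.2 + 1)) k
  have hg0 : ∀ k, g k ∈ A := by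
    intro k
    cases k with
    | zero => exact hchA 0
    | succ k => exact hchA _
  have hglt : ∀ k, (g k).1 < (g k).2 := fun k => hA.1 _ (hg0 k)
  have hgstep : ∀ k, (g k).2 < (g (k + 1)).1 := by
    intro k
    have := hchge ((g k).2 + 1)
    have hgk : g (k + 1) = ch ((g k).2 + 1) := rfl
    rw [hgk]
    omega
  have hmono1 : StrictMono (fun k => (g k).1) :=
    strictMono_nat_of_lt_succ (fun k => lt_trans (hglt k) (hgstep k))
  set X : Set ℕ := Set.range (fun k => (g k).1) with hX
  have hXinf : X.Infinite := Set.infinite_range_of_injective hmono1.injective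
  have hnotin : ∀ k, (g k).2 ∉ X := by
    rintro k ⟨j, hj⟩
    simp only at hj
    rcases Nat.lt_or_ge j (k + 1) with hjk | hjk
    · have : (g j).1 ≤ (g k).1 := hmono1.monotone (by omega)
      have := hglt k
      omega
    · have : (g (k + 1)).1 ≤ (g j).1 := hmono1.monotone hjk
      have := hgstep k
      omega
  refine ⟨X, hXinf, ?_⟩
  have hsub : Set.range g ⊆ {p ∈ A | ¬ (p.1 ∈ X ↔ p.2 ∈ X)} := by
    rintro p ⟨k, rfl⟩
    refine ⟨hg0 k, ?_⟩
    intro hif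
    exact hnotin k (hif.mp ⟨k, rfl⟩)
  have hginj : Function.Injective g := fun a b h => hmono1.injective (congrArg Prod.fst h)
  exact Set.Infinite.mono hsub (Set.infinite_range_of_injective hginj)

lemma sPair_set_nonempty :
    {c : Cardinal | ∃ F : Set (Set ℕ), (∀ X ∈ F, X.Infinite) ∧
      (∀ A : Set (ℕ × ℕ), UnboundedPairs A → ∃ X ∈ F, PairSplits X A) ∧ #F = c}.Nonempty := by
  refine ⟨#{X : Set ℕ | X.Infinite}, {X : Set ℕ | X.Infinite}, fun X hX => hX, ?_, rfl⟩
  intro A hA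
  obtain ⟨X, hXinf, hXs⟩ := exists_pairSplits A hA
  exact ⟨X, hXinf, hXs⟩

lemma eUbd_le (c : Cardinal)
    (hc : c ∈ {c : Cardinal | ∃ F : Set (Set ℕ), (∀ X ∈ F, X.Infinite) ∧
      (∀ A : Set (ℕ × ℕ), UnboundedPairs A → ∃ X ∈ F, PairSplits X A) ∧ #F = c}) :
    eUbd ≤ c := by
  obtain ⟨F, _, hsplit, hcard⟩ := hc
  have hmem : #(code '' F) ∈ {c : Cardinal | ∃ f : ℕ → ℕ, (∀ n, 2 ≤ f n) ∧
      ∃ E : Set (ℕ → ℕ), (∀ s ∈ E, ∀ n, s n < f n) ∧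
      (∀ (D : Set ℕ) (π : (n : ℕ) → (Fin n → ℕ) → ℕ), D.Infinite →
        ∃ s ∈ E, ¬ Predicts D π s) ∧ #E = #(code '' F)} := by
    refine ⟨fB, two_le_fB, code '' F, ?_, ?_, rfl⟩
    · rintro s ⟨X, _, rfl⟩ n
      exact code_lt X n
    · intro D π hD
      obtain ⟨X, hXF, hnp⟩ := evade F hsplit D π hD
      exact ⟨code X, ⟨X, hXF, rfl⟩, hnp⟩
  calc eUbd ≤ #(code '' F) := csInf_le' hmem
  _ ≤ #F := Cardinal.mk_image_le
  _ = c := hcard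

end EubdAux

/-- `𝔢_ubd ≤ 𝔰_pair`. -/
theorem eUbd_le_sPair : eUbd ≤ sPair := by
  exact le_csInf EubdAux.sPair_set_nonempty EubdAux.eUbd_le
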